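/- arXiv:2010.05303 — 2 statements merged into one kernel-verified Lean document; each statement's English description precedes it below -/
import Mathlib

section
/- In hyperbolic space (H² or H³), for any geodesic triangle with vertices A, B, C, the side AC lies in the closed ln(√2 + 1)-neighborhood of the union AB ∪ BC of the other two sides. -/
/-- Inverse hyperbolic cosine. -/
noncomputable def arcosh (x : ℝ) : ℝ := Real.log (x + Real.sqrt (x ^ 2 - 1))

/-- Hyperbolic distance between two points of the upper half-space model of `H³`
(points of `ℝ × ℝ × ℝ` with positive third coordinate), given by the standard formula
`cosh d = 1 + ‖p - q‖² / (2 zₚ z_q)`. -/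
noncomputable def hDist (p q : ℝ × ℝ × ℝ) : ℝ :=
  arcosh (1 + ((p.1 - q.1) ^ 2 + (p.2.1 - q.2.1) ^ 2 + (p.2.2 - q.2.2) ^ 2) /
    (2 * p.2.2 * q.2.2))

/-- The geodesic segment from `A` to `B` in the upper half-space model of `H³`, described
metrically: the set of points lying between `A` and `B`. -/
def hSeg (A B : ℝ × ℝ × ℝ) : Set (ℝ × ℝ × ℝ) :=
  {P | 0 < P.2.2 ∧ hDist A P + hDist P B = hDist A B}

namespace HypThin

noncomputable def XX (p q : ℝ × ℝ × ℝ) : ℝ :=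
  1 + ((p.1 - q.1) ^ 2 + (p.2.1 - q.2.1) ^ 2 + (p.2.2 - q.2.2) ^ 2) /
    (2 * p.2.2 * q.2.2)

lemma hDist_eq (p q : ℝ × ℝ × ℝ) : hDist p q = arcosh (XX p q) := rfl

lemma XX_comm (p q : ℝ × ℝ × ℝ) : XX p q = XX q p := by unfold XX; ring

lemma one_le_XX {p q : ℝ × ℝ × ℝ} (hp : 0 < p.2.2) (hq : 0 < q.2.2) : 1 ≤ XX p q := by
  unfold XX
  have h : 0 ≤ ((p.1 - q.1) ^ 2 + (p.2.1 - q.2.1) ^ 2 + (p.2.2 - q.2.2) ^ 2) /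
      (2 * p.2.2 * q.2.2) := by positivity
  linarith

lemma XX_self {p : ℝ × ℝ × ℝ} (_hp : p.2.2 ≠ 0) : XX p p = 1 := by
  unfold XX; simp

lemma eq_of_XX_eq_one {p q : ℝ × ℝ × ℝ} (hp : 0 < p.2.2) (hq : 0 < q.2.2)
    (h : XX p q = 1) : p = q := by
  unfold XX at h
  have hd : (0:ℝ) < 2 * p.2.2 * q.2.2 := by positivity
  have hS : (p.1 - q.1) ^ 2 + (p.2.1 - q.2.1) ^ 2 + (p.2.2 - q.2.2) ^ 2 = 0 := by
    have := h
    field_simp at this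
    linarith [this]
  have h1 : p.1 = q.1 := by nlinarith [sq_nonneg (p.1 - q.1), sq_nonneg (p.2.1 - q.2.1), sq_nonneg (p.2.2 - q.2.2)]
  have h2 : p.2.1 = q.2.1 := by nlinarith [sq_nonneg (p.1 - q.1), sq_nonneg (p.2.1 - q.2.1), sq_nonneg (p.2.2 - q.2.2)]
  have h3 : p.2.2 = q.2.2 := by nlinarith [sq_nonneg (p.1 - q.1), sq_nonneg (p.2.1 - q.2.1), sq_nonneg (p.2.2 - q.2.2)]
  exact Prod.ext h1 (Prod.ext h2 h3)

lemma arcosh_one : arcosh 1 = 0 := by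
  unfold arcosh; norm_num

lemma hDist_self {p : ℝ × ℝ × ℝ} (hp : p.2.2 ≠ 0) : hDist p p = 0 := by
  rw [hDist_eq, XX_self hp, arcosh_one]

lemma hDist_comm (p q : ℝ × ℝ × ℝ) : hDist p q = hDist q p := by
  rw [hDist_eq, hDist_eq, XX_comm]

lemma exp_arcosh {x : ℝ} (hx : 1 ≤ x) : Real.exp (arcosh x) = x + Real.sqrt (x ^ 2 - 1) := by
  unfold arcosh
  exact Real.exp_log (by nlinarith [Real.sqrt_nonneg (x ^ 2 - 1)])

lemma arcosh_le_arcosh {x y : ℝ} (hx : 1 ≤ x) (hxy : x ≤ y) : arcosh x ≤ arcosh y := by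
  unfold arcosh
  have h1 : Real.sqrt (x ^ 2 - 1) ≤ Real.sqrt (y ^ 2 - 1) :=
    Real.sqrt_le_sqrt (by nlinarith)
  have hp : (0:ℝ) < x + Real.sqrt (x ^ 2 - 1) := by nlinarith [Real.sqrt_nonneg (x ^ 2 - 1)]
  exact Real.log_le_log hp (by linarith)

lemma arcosh_inj {x y : ℝ} (hx : 1 ≤ x) (hy : 1 ≤ y) (h : arcosh x = arcosh y) : x = y := by
  have he : x + Real.sqrt (x ^ 2 - 1) = y + Real.sqrt (y ^ 2 - 1) := by
    rw [← exp_arcosh hx, ← exp_arcosh hy, h]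
  rcases lt_trichotomy x y with hlt | heq | hgt
  · have := Real.sqrt_le_sqrt (show x ^ 2 - 1 ≤ y ^ 2 - 1 by nlinarith)
    linarith
  · exact heq
  · have := Real.sqrt_le_sqrt (show y ^ 2 - 1 ≤ x ^ 2 - 1 by nlinarith)
    linarith

lemma arcosh_add {x y : ℝ} (hx : 1 ≤ x) (hy : 1 ≤ y) :
    arcosh x + arcosh y = arcosh (x * y + Real.sqrt ((x ^ 2 - 1) * (y ^ 2 - 1))) := by
  have hx2 : (0:ℝ) ≤ x ^ 2 - 1 := by nlinarith
  have hy2 : (0:ℝ) ≤ y ^ 2 - 1 := by nlinarith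
  set s := Real.sqrt (x ^ 2 - 1) with hs
  set t := Real.sqrt (y ^ 2 - 1) with ht
  have hs0 : 0 ≤ s := Real.sqrt_nonneg _
  have ht0 : 0 ≤ t := Real.sqrt_nonneg _
  have hs2 : s ^ 2 = x ^ 2 - 1 := Real.sq_sqrt hx2
  have ht2 : t ^ 2 = y ^ 2 - 1 := Real.sq_sqrt hy2
  have hst : Real.sqrt ((x ^ 2 - 1) * (y ^ 2 - 1)) = s * t := by
    rw [Real.sqrt_mul hx2]
  set z := x * y + s * t with hz
  have hzs : Real.sqrt (z ^ 2 - 1) = x * t + y * s := by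
    rw [show z ^ 2 - 1 = (x * t + y * s) ^ 2 by
      linear_combination (z + x * y + s * t) * hz + (t ^ 2 - y ^ 2) * hs2 - ht2]
    exact Real.sqrt_sq (by nlinarith)
  unfold arcosh
  rw [hst, ← hz, hzs, ← Real.log_mul (by nlinarith) (by nlinarith)]
  congr 1
  linear_combination -hz

lemma arcosh_sqrt2 : arcosh (Real.sqrt 2) = Real.log (Real.sqrt 2 + 1) := by
  unfold arcosh
  rw [Real.sq_sqrt (by norm_num : (0:ℝ) ≤ 2)]
  norm_num

def mdot (u v : ℝ × ℝ × ℝ × ℝ) : ℝ :=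
  u.1 * v.1 + u.2.1 * v.2.1 + u.2.2.1 * v.2.2.1 - u.2.2.2 * v.2.2.2

noncomputable def iota (p : ℝ × ℝ × ℝ) : ℝ × ℝ × ℝ × ℝ :=
  (p.1 / p.2.2, p.2.1 / p.2.2,
   (p.1 ^ 2 + p.2.1 ^ 2 + p.2.2 ^ 2 - 1) / (2 * p.2.2),
   (p.1 ^ 2 + p.2.1 ^ 2 + p.2.2 ^ 2 + 1) / (2 * p.2.2))

lemma mdot_iota {p q : ℝ × ℝ × ℝ} (hp : 0 < p.2.2) (hq : 0 < q.2.2) :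
    mdot (iota p) (iota q) = -XX p q := by
  unfold mdot iota XX
  have h1 : p.2.2 ≠ 0 := ne_of_gt hp
  have h2 : q.2.2 ≠ 0 := ne_of_gt hq
  field_simp
  ring

lemma XX_point_of_vector (V1 V2 V3 V4 n : ℝ) (hn : 0 < n) (h34 : 0 < V4 - V3)
    (hVV : V1 ^ 2 + V2 ^ 2 + V3 ^ 2 - V4 ^ 2 = -n ^ 2) (p : ℝ × ℝ × ℝ) (hp : 0 < p.2.2) :
    XX p (V1 / (V4 - V3), V2 / (V4 - V3), n / (V4 - V3)) * n
      = -mdot (iota p) (V1, V2, V3, V4) := by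
  unfold XX mdot iota
  have h1 : p.2.2 ≠ 0 := ne_of_gt hp
  have h2 : V4 - V3 ≠ 0 := ne_of_gt h34
  field_simp
  linear_combination hVV

lemma exists_point (A B : ℝ × ℝ × ℝ) (hA : 0 < A.2.2) (hB : 0 < B.2.2) (x y n : ℝ)
    (hx : 0 ≤ x) (hy : 0 ≤ y) (hxy : 0 < x + y) (hn : 0 < n)
    (hn2 : n ^ 2 = x ^ 2 + y ^ 2 + 2 * XX A B * x * y) :
    ∃ Q : ℝ × ℝ × ℝ, 0 < Q.2.2 ∧
      ∀ p : ℝ × ℝ × ℝ, 0 < p.2.2 → XX p Q * n = x * XX p A + y * XX p B := by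
  set a := iota A with ha
  set b := iota B with hb
  set W1 := x * a.1 + y * b.1 with hW1
  set W2 := x * a.2.1 + y * b.2.1 with hW2
  set W3 := x * a.2.2.1 + y * b.2.2.1 with hW3
  set W4 := x * a.2.2.2 + y * b.2.2.2 with hW4
  have hAz : A.2.2 ≠ 0 := ne_of_gt hA
  have hBz : B.2.2 ≠ 0 := ne_of_gt hB
  have h34 : 0 < W4 - W3 := by
    have hEq : W4 - W3 = x / A.2.2 + y / B.2.2 := by
      rw [hW4, hW3, ha, hb]; unfold iota; field_simp; ring
    rw [hEq]
    rcases lt_or_ge 0 x with hx0 | hx0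
    · have h1 : 0 < x / A.2.2 := div_pos hx0 hA
      have h2 : 0 ≤ y / B.2.2 := div_nonneg hy (le_of_lt hB)
      linarith
    · have hx' : x = 0 := le_antisymm hx0 hx
      have hy0 : 0 < y := by linarith
      have h2 : 0 < y / B.2.2 := div_pos hy0 hB
      rw [hx']
      simp
      linarith
  have maa : mdot a a = -1 := by rw [ha, mdot_iota hA hA, XX_self hAz]
  have mbb : mdot b b = -1 := by rw [hb, mdot_iota hB hB, XX_self hBz]
  have mab : mdot a b = -XX A B := mdot_iota hA hB
  have hVV : W1 ^ 2 + W2 ^ 2 + W3 ^ 2 - W4 ^ 2 = -n ^ 2 := by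
    have expand : W1 ^ 2 + W2 ^ 2 + W3 ^ 2 - W4 ^ 2
        = x ^ 2 * mdot a a + 2 * x * y * mdot a b + y ^ 2 * mdot b b := by
      rw [hW1, hW2, hW3, hW4]; unfold mdot; ring
    rw [expand, maa, mbb, mab]
    linear_combination hn2
  refine ⟨(W1 / (W4 - W3), W2 / (W4 - W3), n / (W4 - W3)), by positivity, ?_⟩
  intro p hp
  rw [XX_point_of_vector W1 W2 W3 W4 n hn h34 hVV p hp]
  have mpa : mdot (iota p) a = -XX p A := mdot_iota hp hA
  have mpb : mdot (iota p) b = -XX p B := mdot_iota hp hB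
  have expand : mdot (iota p) (W1, W2, W3, W4)
      = x * mdot (iota p) a + y * mdot (iota p) b := by
    rw [hW1, hW2, hW3, hW4]; unfold mdot; ring
  rw [expand, mpa, mpb]; ring

lemma null_orthogonal (V1 V2 V3 V4 p1 p2 p3 p4 : ℝ)
    (hVV : V1 ^ 2 + V2 ^ 2 + V3 ^ 2 - V4 ^ 2 = 0)
    (hVp : V1 * p1 + V2 * p2 + V3 * p3 - V4 * p4 = 0)
    (hpp : p1 ^ 2 + p2 ^ 2 + p3 ^ 2 - p4 ^ 2 = -1) :
    V1 = 0 ∧ V2 = 0 ∧ V3 = 0 ∧ V4 = 0 := by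
  have e1 : V1 * p1 + V2 * p2 + V3 * p3 = V4 * p4 := by linarith
  have e2 : (V1 * p1 + V2 * p2 + V3 * p3) ^ 2 = V4 ^ 2 * p4 ^ 2 := by rw [e1]; ring
  have lag : (V1 * p1 + V2 * p2 + V3 * p3) ^ 2 +
      ((V1 * p2 - V2 * p1) ^ 2 + (V1 * p3 - V3 * p1) ^ 2 + (V2 * p3 - V3 * p2) ^ 2)
      = (V1 ^ 2 + V2 ^ 2 + V3 ^ 2) * (p1 ^ 2 + p2 ^ 2 + p3 ^ 2) := by ring
  have h4 : V4 ^ 2 ≤ 0 := by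
    nlinarith [sq_nonneg (V1 * p2 - V2 * p1), sq_nonneg (V1 * p3 - V3 * p1),
      sq_nonneg (V2 * p3 - V3 * p2)]
  have hV4 : V4 = 0 := by nlinarith [sq_nonneg V4]
  have h1 : V1 = 0 := by nlinarith [sq_nonneg V1, sq_nonneg V2, sq_nonneg V3]
  have h2 : V2 = 0 := by nlinarith [sq_nonneg V1, sq_nonneg V2, sq_nonneg V3]
  have h3 : V3 = 0 := by nlinarith [sq_nonneg V1, sq_nonneg V2, sq_nonneg V3]
  exact ⟨h1, h2, h3, hV4⟩

lemma key_identity (A C P B : ℝ × ℝ × ℝ)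
    (hA : 0 < A.2.2) (hC : 0 < C.2.2) (hP : 0 < P.2.2) (hB : 0 < B.2.2)
    (hu : 1 ≤ XX A P) (hv : 1 ≤ XX C P)
    (hw : XX A C = XX A P * XX C P + Real.sqrt ((XX A P ^ 2 - 1) * (XX C P ^ 2 - 1))) :
    Real.sqrt (XX C P ^ 2 - 1) * XX A B + Real.sqrt (XX A P ^ 2 - 1) * XX C B
      = (Real.sqrt (XX C P ^ 2 - 1) * XX A P + Real.sqrt (XX A P ^ 2 - 1) * XX C P)
        * XX P B := by
  set u := XX A P with hudef
  set v := XX C P with hvdef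
  set X := Real.sqrt (u ^ 2 - 1) with hXdef
  set Xc := Real.sqrt (v ^ 2 - 1) with hXcdef
  have hX2 : X ^ 2 = u ^ 2 - 1 := Real.sq_sqrt (by nlinarith)
  have hXc2 : Xc ^ 2 = v ^ 2 - 1 := Real.sq_sqrt (by nlinarith)
  have hsm : Real.sqrt ((u ^ 2 - 1) * (v ^ 2 - 1)) = X * Xc := by
    rw [Real.sqrt_mul (by nlinarith)]
  rw [hsm] at hw
  set g := Xc * u + X * v with hgdef
  set a := iota A with ha
  set c := iota C with hc
  set p := iota P with hpd
  set b := iota B with hbd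
  have maa : mdot a a = -1 := by rw [ha, mdot_iota hA hA, XX_self (ne_of_gt hA)]
  have mcc : mdot c c = -1 := by rw [hc, mdot_iota hC hC, XX_self (ne_of_gt hC)]
  have mpp : mdot p p = -1 := by rw [hpd, mdot_iota hP hP, XX_self (ne_of_gt hP)]
  have mac : mdot a c = -XX A C := mdot_iota hA hC
  have map : mdot a p = -u := mdot_iota hA hP
  have mcp : mdot c p = -v := mdot_iota hC hP
  have mab : mdot a b = -XX A B := mdot_iota hA hB
  have mcb : mdot c b = -XX C B := mdot_iota hC hB
  have mpb : mdot p b = -XX P B := mdot_iota hP hB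
  set V1 := Xc * a.1 + X * c.1 - g * p.1 with hV1
  set V2 := Xc * a.2.1 + X * c.2.1 - g * p.2.1 with hV2
  set V3 := Xc * a.2.2.1 + X * c.2.2.1 - g * p.2.2.1 with hV3
  set V4 := Xc * a.2.2.2 + X * c.2.2.2 - g * p.2.2.2 with hV4
  have hVV : V1 ^ 2 + V2 ^ 2 + V3 ^ 2 - V4 ^ 2 = 0 := by
    have expand : V1 ^ 2 + V2 ^ 2 + V3 ^ 2 - V4 ^ 2
        = Xc ^ 2 * mdot a a + X ^ 2 * mdot c c + g ^ 2 * mdot p p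
          + 2 * Xc * X * mdot a c - 2 * Xc * g * mdot a p - 2 * X * g * mdot c p := by
      rw [hV1, hV2, hV3, hV4]; unfold mdot; ring
    rw [expand, maa, mcc, mpp, mac, map, mcp]
    linear_combination (-2 * Xc * X) * hw - Xc ^ 2 * hX2 - X ^ 2 * hXc2 + (2 * Xc * u + 2 * X * v - g) * hgdef
  have hVp : V1 * p.1 + V2 * p.2.1 + V3 * p.2.2.1 - V4 * p.2.2.2 = 0 := by
    have expand : V1 * p.1 + V2 * p.2.1 + V3 * p.2.2.1 - V4 * p.2.2.2
        = Xc * mdot a p + X * mdot c p - g * mdot p p := by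
      rw [hV1, hV2, hV3, hV4]; unfold mdot; ring
    rw [expand, map, mcp, mpp]
    linear_combination hgdef
  have hpp' : p.1 ^ 2 + p.2.1 ^ 2 + p.2.2.1 ^ 2 - p.2.2.2 ^ 2 = -1 := by
    have h := mpp
    unfold mdot at h
    linear_combination h
  obtain ⟨z1, z2, z3, z4⟩ := null_orthogonal V1 V2 V3 V4 p.1 p.2.1 p.2.2.1 p.2.2.2 hVV hVp hpp'
  have expand : Xc * mdot a b + X * mdot c b - g * mdot p b
      = V1 * b.1 + V2 * b.2.1 + V3 * b.2.2.1 - V4 * b.2.2.2 := by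
    rw [hV1, hV2, hV3, hV4]; unfold mdot; ring
  rw [mab, mcb, mpb] at expand
  rw [z1, z2, z3, z4] at expand
  have hfin : -(Xc * XX A B) + -(X * XX C B) + g * XX P B = 0 := by
    linear_combination expand
  linear_combination -hfin + (XX P B) * hgdef


set_option maxHeartbeats 1000000 in
lemma side (A B P : ℝ × ℝ × ℝ) (hA : 0 < A.2.2) (hB : 0 < B.2.2) (hP : 0 < P.2.2)
    (hr : 1 < XX A B) (hcond : XX A P * XX B P ≤ XX A B) :
    ∃ Q : ℝ × ℝ × ℝ, (0 < Q.2.2 ∧ hDist A Q + hDist Q B = hDist A B) ∧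
      hDist P Q ≤ Real.log (Real.sqrt 2 + 1) := by
  set u := XX A P with hudef
  set m := XX B P with hmdef
  set r := XX A B with hrdef
  have hu : 1 ≤ u := one_le_XX hA hP
  have hm : 1 ≤ m := one_le_XX hB hP
  set x := r * m - u with hxd
  set y := r * u - m with hyd
  have hx : 0 ≤ x := by
    rw [hxd]
    nlinarith [mul_nonneg (sub_nonneg.mpr hcond) (by linarith : (0:ℝ) ≤ m), hu, hm]
  have hy : 0 ≤ y := by
    rw [hyd]
    nlinarith [mul_nonneg (sub_nonneg.mpr hcond) (by linarith : (0:ℝ) ≤ u), hu, hm]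
  have hxy : 0 < x + y := by
    rw [hxd, hyd]
    nlinarith [mul_pos (sub_pos.mpr hr) (by linarith : (0:ℝ) < u + m)]
  have hKpos : 0 < x * u + y * m := by
    nlinarith [mul_nonneg hx (by linarith : (0:ℝ) ≤ u - 1),
      mul_nonneg hy (by linarith : (0:ℝ) ≤ m - 1), hxy]
  have hKle : x * u + y * m ≤ 2 * (r ^ 2 - 1) := by
    have t1 : 0 ≤ 2 * r * (r - u * m) :=
      mul_nonneg (by linarith) (by linarith)
    have t2 : 2 ≤ u ^ 2 + m ^ 2 := by nlinarith [hu, hm]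
    rw [hxd, hyd]
    nlinarith [t1, t2]
  have hrad : 0 < x ^ 2 + y ^ 2 + 2 * r * x * y := by
    have hid : x ^ 2 + y ^ 2 + 2 * r * x * y = (x * u + y * m) * (r ^ 2 - 1) := by
      rw [hxd, hyd]; ring
    rw [hid]
    have h1 : (0:ℝ) < r ^ 2 - 1 := by nlinarith
    positivity
  set n := Real.sqrt (x ^ 2 + y ^ 2 + 2 * r * x * y) with hndef
  have hnpos : 0 < n := Real.sqrt_pos.mpr hrad
  have hnne : n ≠ 0 := ne_of_gt hnpos
  have hn2 : n ^ 2 = x ^ 2 + y ^ 2 + 2 * r * x * y := Real.sq_sqrt (le_of_lt hrad)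
  have hn2K : n ^ 2 = (x * u + y * m) * (r ^ 2 - 1) := by
    rw [hn2, hxd, hyd]; ring
  have hK2 : (x * u + y * m) ^ 2 ≤ 2 * n ^ 2 := by
    rw [hn2K]
    nlinarith [hKpos, hKle]
  have hKn : x * u + y * m ≤ Real.sqrt 2 * n :=
    calc x * u + y * m = Real.sqrt ((x * u + y * m) ^ 2) := (Real.sqrt_sq hKpos.le).symm
      _ ≤ Real.sqrt (2 * n ^ 2) := Real.sqrt_le_sqrt hK2
      _ = Real.sqrt 2 * n := by
          rw [Real.sqrt_mul (by norm_num : (0:ℝ) ≤ 2), Real.sqrt_sq hnpos.le]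
  have hrr : (0:ℝ) ≤ r ^ 2 - 1 := by nlinarith
  set ρ := Real.sqrt (r ^ 2 - 1) with hρdef
  have hρ2 : ρ ^ 2 = r ^ 2 - 1 := Real.sq_sqrt hrr
  have hρ0 : 0 ≤ ρ := Real.sqrt_nonneg _
  obtain ⟨Q, hQz, hlin⟩ := exists_point A B hA hB x y n hx hy hxy hnpos hn2
  have lA : XX A Q * n = x + y * r := by
    have h := hlin A hA
    linear_combination h + x * XX_self (ne_of_gt hA) - y * hrdef
  have lB : XX B Q * n = x * r + y := by
    have h := hlin B hB
    linear_combination h + x * XX_comm B A - x * hrdef + y * XX_self (ne_of_gt hB)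
  have lP : XX P Q * n = x * u + y * m := by
    have h := hlin P hP
    linear_combination h + x * XX_comm P A + y * XX_comm P B - x * hudef - y * hmdef
  clear hlin
  have h1 : 1 ≤ XX A Q := one_le_XX hA hQz
  have h2 : 1 ≤ XX Q B := one_le_XX hQz hB
  have he1 : XX A Q = (x + y * r) / n := (eq_div_iff hnne).mpr lA
  have he2 : XX Q B = (x * r + y) / n := by
    rw [XX_comm Q B]
    exact (eq_div_iff hnne).mpr lB
  clear_value u m r x y n ρ
  have hq1 : XX A Q ^ 2 - 1 = (y * ρ / n) ^ 2 := by
    rw [he1]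
    field_simp
    linear_combination -hn2 - y ^ 2 * hρ2
  have hq2 : XX Q B ^ 2 - 1 = (x * ρ / n) ^ 2 := by
    rw [he2]
    field_simp
    linear_combination -hn2 - x ^ 2 * hρ2
  have hsqrt : Real.sqrt ((XX A Q ^ 2 - 1) * (XX Q B ^ 2 - 1)) = (y * ρ / n) * (x * ρ / n) := by
    rw [hq1, hq2, ← mul_pow]
    exact Real.sqrt_sq (mul_nonneg (div_nonneg (mul_nonneg hy hρ0) hnpos.le)
      (div_nonneg (mul_nonneg hx hρ0) hnpos.le))
  have hval : XX A Q * XX Q B + Real.sqrt ((XX A Q ^ 2 - 1) * (XX Q B ^ 2 - 1)) = r := by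
    rw [hsqrt, he1, he2]
    field_simp
    linear_combination -r * hn2 + x * y * hρ2
  refine ⟨Q, ⟨hQz, ?_⟩, ?_⟩
  · rw [hDist_eq A Q, hDist_eq Q B, hDist_eq A B, arcosh_add h1 h2, hval, hrdef]
  · have hq : XX P Q = (x * u + y * m) / n := (eq_div_iff hnne).mpr lP
    have hXXle : XX P Q ≤ Real.sqrt 2 := by
      rw [hq, div_le_iff₀ hnpos]
      linarith
    rw [hDist_eq]
    calc arcosh (XX P Q) ≤ arcosh (Real.sqrt 2) :=
          arcosh_le_arcosh (one_le_XX hP hQz) hXXle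
      _ = Real.log (Real.sqrt 2 + 1) := arcosh_sqrt2

end HypThin

open HypThin in
/-- In hyperbolic space, for any geodesic triangle with vertices `A`, `B`,
`C`, the side `AC` lies in the closed `ln (√2 + 1)`-neighborhood of the union
`AB ∪ BC` of the other two sides. -/
theorem hyperbolic_triangles_are_thin
    (A B C : ℝ × ℝ × ℝ) (hA : 0 < A.2.2) (hB : 0 < B.2.2) (hC : 0 < C.2.2) :
    ∀ P ∈ hSeg A C, ∃ Q ∈ hSeg A B ∪ hSeg B C,
      hDist P Q ≤ Real.log (Real.sqrt 2 + 1) := by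
  intro P hP
  obtain ⟨hPz, hsum⟩ := hP
  have hlog : (0:ℝ) ≤ Real.log (Real.sqrt 2 + 1) :=
    Real.log_nonneg (by nlinarith [Real.sqrt_nonneg 2])
  by_cases hAB1 : XX A B = 1
  · obtain rfl := eq_of_XX_eq_one hA hB hAB1
    exact ⟨P, Or.inr ⟨hPz, hsum⟩, by rw [hDist_self (ne_of_gt hPz)]; exact hlog⟩
  by_cases hBC1 : XX B C = 1
  · obtain rfl := eq_of_XX_eq_one hB hC hBC1
    exact ⟨P, Or.inl ⟨hPz, hsum⟩, by rw [hDist_self (ne_of_gt hPz)]; exact hlog⟩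
  by_cases hAP1 : XX A P = 1
  · obtain rfl := eq_of_XX_eq_one hA hPz hAP1
    refine ⟨A, Or.inl ⟨hA, ?_⟩, ?_⟩
    · rw [hDist_self (ne_of_gt hA), zero_add]
    · rw [hDist_self (ne_of_gt hA)]; exact hlog
  by_cases hCP1 : XX C P = 1
  · obtain rfl := eq_of_XX_eq_one hC hPz hCP1
    refine ⟨C, Or.inr ⟨hC, ?_⟩, ?_⟩
    · rw [hDist_self (ne_of_gt hC), add_zero]
    · rw [hDist_self (ne_of_gt hC)]; exact hlog
  have hu : 1 < XX A P := lt_of_le_of_ne (one_le_XX hA hPz) (Ne.symm hAP1)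
  have hv : 1 < XX C P := lt_of_le_of_ne (one_le_XX hC hPz) (Ne.symm hCP1)
  have hrAB : 1 < XX A B := lt_of_le_of_ne (one_le_XX hA hB) (Ne.symm hAB1)
  have hrBC : 1 < XX B C := lt_of_le_of_ne (one_le_XX hB hC) (Ne.symm hBC1)
  have hsum' : arcosh (XX A P) + arcosh (XX C P) = arcosh (XX A C) := by
    rw [hDist_eq, hDist_eq, hDist_eq, XX_comm P C] at hsum
    exact hsum
  rw [arcosh_add hu.le hv.le] at hsum'
  have hw : XX A C = XX A P * XX C P + Real.sqrt ((XX A P ^ 2 - 1) * (XX C P ^ 2 - 1)) :=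
    (arcosh_inj (by nlinarith [Real.sqrt_nonneg ((XX A P ^ 2 - 1) * (XX C P ^ 2 - 1))])
      (one_le_XX hA hC) hsum').symm
  have hkey := key_identity A C P B hA hC hPz hB hu.le hv.le hw
  have hXpos : 0 < Real.sqrt (XX A P ^ 2 - 1) := Real.sqrt_pos.mpr (by nlinarith)
  have hXcpos : 0 < Real.sqrt (XX C P ^ 2 - 1) := Real.sqrt_pos.mpr (by nlinarith)
  by_cases hside1 : XX A P * XX B P ≤ XX A B
  · obtain ⟨Q, hQmem, hQd⟩ := side A B P hA hB hPz hrAB hside1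
    exact ⟨Q, Or.inl hQmem, hQd⟩
  · push_neg at hside1
    have hside2 : XX C P * XX B P ≤ XX C B := by
      by_contra hcon
      push_neg at hcon
      have e1 : Real.sqrt (XX C P ^ 2 - 1) * XX A B
          < Real.sqrt (XX C P ^ 2 - 1) * (XX A P * XX B P) :=
        mul_lt_mul_of_pos_left hside1 hXcpos
      have e2 : Real.sqrt (XX A P ^ 2 - 1) * XX C B
          < Real.sqrt (XX A P ^ 2 - 1) * (XX C P * XX B P) :=
        mul_lt_mul_of_pos_left hcon hXpos
      rw [XX_comm P B] at hkey
      have expand : (Real.sqrt (XX C P ^ 2 - 1) * XX A P + Real.sqrt (XX A P ^ 2 - 1) * XX C P)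
          * XX B P = Real.sqrt (XX C P ^ 2 - 1) * (XX A P * XX B P)
            + Real.sqrt (XX A P ^ 2 - 1) * (XX C P * XX B P) := by ring
      linarith [hkey, e1, e2, expand]
    have hrCB : 1 < XX C B := by rw [XX_comm C B]; exact hrBC
    obtain ⟨Q, ⟨hQz, hQeq⟩, hQd⟩ := side C B P hC hB hPz hrCB hside2
    refine ⟨Q, Or.inr ⟨hQz, ?_⟩, hQd⟩
    rw [hDist_comm B Q, hDist_comm Q C, hDist_comm B C]
    linarith [hQeq]
end

section
/- Let AB be a geodesic segment in H³ of length at least 2D (for D > 0), and let γ be a bi-infinite geodesic with d(A, γ) < 1 and d(B, γ) < 1. Then for any point W on the segment AB with d(W, A) > D and d(W, B) > D, one has d(W, γ) ≤ 3e^{-D}. -/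
/-- A bi-infinite geodesic of `H³` (upper half-space model): the image of an isometric
embedding of `ℝ`. -/
def IsGeodesicLine (γ : Set (ℝ × ℝ × ℝ)) : Prop :=
  ∃ f : ℝ → ℝ × ℝ × ℝ, (∀ t, 0 < (f t).2.2) ∧ (∀ s t, hDist (f s) (f t) = |s - t|) ∧
    γ = Set.range f

/-! ### Auxiliary material: arcosh -/

lemma cosh_arcosh {y : ℝ} (hy : 1 ≤ y) : Real.cosh (arcosh y) = y := by
  have h1 : (0:ℝ) ≤ y ^ 2 - 1 := by nlinarith
  have hs : Real.sqrt (y ^ 2 - 1) ^ 2 = y ^ 2 - 1 := Real.sq_sqrt h1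
  have hsn : 0 ≤ Real.sqrt (y ^ 2 - 1) := Real.sqrt_nonneg _
  have hpos : 0 < y + Real.sqrt (y ^ 2 - 1) := by nlinarith
  rw [arcosh, Real.cosh_eq, Real.exp_log hpos, Real.exp_neg, Real.exp_log hpos]
  field_simp
  nlinarith

lemma arcosh_nonneg {y : ℝ} (hy : 1 ≤ y) : 0 ≤ arcosh y :=
  Real.log_nonneg (by nlinarith [Real.sqrt_nonneg (y ^ 2 - 1)])

lemma arcosh_le_of_le {y t : ℝ} (hy : 1 ≤ y) (ht : 0 ≤ t) (h : y ≤ Real.cosh t) :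
    arcosh y ≤ t := by
  have h1 : (0:ℝ) ≤ y ^ 2 - 1 := by nlinarith
  have hsh : 0 ≤ Real.sinh t := Real.sinh_nonneg_iff.mpr ht
  have hsq : Real.sqrt (y ^ 2 - 1) ≤ Real.sinh t := by
    have : y ^ 2 - 1 ≤ Real.sinh t ^ 2 := by
      have := Real.cosh_sq t
      nlinarith [Real.cosh_pos t]
    calc Real.sqrt (y ^ 2 - 1) ≤ Real.sqrt (Real.sinh t ^ 2) := Real.sqrt_le_sqrt this
      _ = |Real.sinh t| := Real.sqrt_sq_eq_abs _
      _ = Real.sinh t := abs_of_nonneg hsh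
  have : y + Real.sqrt (y ^ 2 - 1) ≤ Real.exp t := by
    rw [← Real.cosh_add_sinh]; linarith
  calc arcosh y ≤ Real.log (Real.exp t) :=
        Real.log_le_log (by nlinarith [Real.sqrt_nonneg (y ^ 2 - 1)]) this
    _ = t := Real.log_exp t

lemma le_arcosh {y t : ℝ} (ht : 0 ≤ t) (h : Real.cosh t ≤ y) : t ≤ arcosh y := by
  have hy : 1 ≤ y := le_trans (Real.one_le_cosh t) h
  have h1 : (0:ℝ) ≤ y ^ 2 - 1 := by nlinarith
  have hsq : Real.sinh t ≤ Real.sqrt (y ^ 2 - 1) := by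
    have h2 : Real.sinh t ^ 2 ≤ y ^ 2 - 1 := by
      have := Real.cosh_sq t
      nlinarith [Real.cosh_pos t, Real.one_le_cosh t]
    have hsh : 0 ≤ Real.sinh t := Real.sinh_nonneg_iff.mpr ht
    nlinarith [Real.sq_sqrt h1, Real.sqrt_nonneg (y ^ 2 - 1)]
  have hle : Real.exp t ≤ y + Real.sqrt (y ^ 2 - 1) := by
    rw [← Real.cosh_add_sinh]; linarith
  calc t = Real.log (Real.exp t) := (Real.log_exp t).symm
    _ ≤ arcosh y := Real.log_le_log (Real.exp_pos t) hle

/-! ### Auxiliary material: the hyperboloid (Minkowski) model -/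

abbrev M4 := ℝ × ℝ × ℝ × ℝ

/-- The Minkowski inner product on `ℝ⁴` (signature `-+++`). -/
def mdot (u v : M4) : ℝ :=
  -(u.1 * v.1) + u.2.1 * v.2.1 + u.2.2.1 * v.2.2.1 + u.2.2.2 * v.2.2.2

/-- Embedding of the upper half-space model into the hyperboloid model. -/
noncomputable def iota (p : ℝ × ℝ × ℝ) : M4 :=
  ((p.1 ^ 2 + p.2.1 ^ 2 + p.2.2 ^ 2 + 1) / (2 * p.2.2), p.1 / p.2.2, p.2.1 / p.2.2,
    (p.1 ^ 2 + p.2.1 ^ 2 + p.2.2 ^ 2 - 1) / (2 * p.2.2))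

/-- The argument of `arcosh` in the definition of `hDist`. -/
noncomputable def coshQ (p q : ℝ × ℝ × ℝ) : ℝ :=
  1 + ((p.1 - q.1) ^ 2 + (p.2.1 - q.2.1) ^ 2 + (p.2.2 - q.2.2) ^ 2) / (2 * p.2.2 * q.2.2)

/-- Linear combination of two vectors of `M4`. -/
def lc (c d : ℝ) (a b : M4) : M4 :=
  (c * a.1 + d * b.1, c * a.2.1 + d * b.2.1, c * a.2.2.1 + d * b.2.2.1,
    c * a.2.2.2 + d * b.2.2.2)

/-- Difference of two vectors of `M4`. -/
def sub4 (a b : M4) : M4 := (a.1 - b.1, a.2.1 - b.2.1, a.2.2.1 - b.2.2.1, a.2.2.2 - b.2.2.2)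

lemma mdot_comm (u v : M4) : mdot u v = mdot v u := by simp [mdot]; ring
lemma mdot_lc_left (c d : ℝ) (a b x : M4) :
    mdot (lc c d a b) x = c * mdot a x + d * mdot b x := by simp [mdot, lc]; ring
lemma mdot_lc_right (c d : ℝ) (a b x : M4) :
    mdot x (lc c d a b) = c * mdot x a + d * mdot x b := by simp [mdot, lc]; ring
lemma mdot_sub_left (a b x : M4) : mdot (sub4 a b) x = mdot a x - mdot b x := by
  simp [mdot, sub4]; ring
lemma mdot_sub_right (a b x : M4) : mdot x (sub4 a b) = mdot x a - mdot x b := by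
  simp [mdot, sub4]; ring

lemma eq_of_sub4_eq_zero {a b : M4} (h : sub4 a b = ((0:ℝ), (0:ℝ), (0:ℝ), (0:ℝ))) :
    a = b := by
  obtain ⟨a1, a2, a3, a4⟩ := a; obtain ⟨b1, b2, b3, b4⟩ := b
  simp only [sub4, Prod.mk.injEq] at h
  obtain ⟨h1, h2, h3, h4⟩ := h
  refine Prod.ext ?_ (Prod.ext ?_ (Prod.ext ?_ ?_)) <;> simp <;> linarith

lemma coshQ_ge_one {p q : ℝ × ℝ × ℝ} (hp : 0 < p.2.2) (hq : 0 < q.2.2) : 1 ≤ coshQ p q := by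
  have h1 : 0 < 2 * p.2.2 * q.2.2 := by positivity
  have h2 : 0 ≤ ((p.1 - q.1) ^ 2 + (p.2.1 - q.2.1) ^ 2 + (p.2.2 - q.2.2) ^ 2) /
      (2 * p.2.2 * q.2.2) := by positivity
  simp only [coshQ]; linarith

lemma mdot_iota {p q : ℝ × ℝ × ℝ} (hp : 0 < p.2.2) (hq : 0 < q.2.2) :
    mdot (iota p) (iota q) = -coshQ p q := by
  simp only [mdot, iota, coshQ]
  field_simp
  ring

lemma mdot_iota_self {p : ℝ × ℝ × ℝ} (hp : 0 < p.2.2) : mdot (iota p) (iota p) = -1 := by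
  rw [mdot_iota hp hp]; simp [coshQ]

lemma iota_fst_pos {p : ℝ × ℝ × ℝ} (hp : 0 < p.2.2) : 0 < (iota p).1 := by
  simp only [iota]; positivity

lemma hDist_eq_arcosh (p q : ℝ × ℝ × ℝ) : hDist p q = arcosh (coshQ p q) := rfl

lemma cosh_hDist {p q : ℝ × ℝ × ℝ} (hp : 0 < p.2.2) (hq : 0 < q.2.2) :
    Real.cosh (hDist p q) = coshQ p q := by
  rw [hDist_eq_arcosh, cosh_arcosh (coshQ_ge_one hp hq)]

lemma hDist_comm (p q : ℝ × ℝ × ℝ) : hDist p q = hDist q p := by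
  simp only [hDist]; ring_nf

lemma hDist_nonneg {p q : ℝ × ℝ × ℝ} (hp : 0 < p.2.2) (hq : 0 < q.2.2) :
    0 ≤ hDist p q := by
  rw [hDist_eq_arcosh]; exact arcosh_nonneg (coshQ_ge_one hp hq)

/-- Reverse Cauchy–Schwarz: two future unit timelike vectors. -/
lemma mdot_le_neg_one {x u : M4} (hx : mdot x x = -1) (hu : mdot u u = -1)
    (hx0 : 0 < x.1) (hu0 : 0 < u.1) : mdot x u ≤ -1 := by
  obtain ⟨x0, x1, x2, x3⟩ := x; obtain ⟨u0, u1, u2, u3⟩ := u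
  simp only [mdot] at *
  have hx1 : 1 ≤ x0 := by nlinarith [sq_nonneg x1, sq_nonneg x2, sq_nonneg x3]
  have hu1 : 1 ≤ u0 := by nlinarith [sq_nonneg u1, sq_nonneg u2, sq_nonneg u3]
  have hxu : 1 ≤ x0 * u0 := one_le_mul_of_one_le_of_one_le hx1 hu1
  have key : (x1*u1 + x2*u2 + x3*u3)^2 ≤ (x0^2 - 1) * (u0^2 - 1) := by
    nlinarith [sq_nonneg (x1*u2 - x2*u1), sq_nonneg (x1*u3 - x3*u1), sq_nonneg (x2*u3 - x3*u2)]
  nlinarith [key, sq_nonneg (x0 - u0), hxu]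

/-- Vectors orthogonal to a timelike vector are spacelike. -/
lemma mdot_self_nonneg_of_orth {u r : M4} (hu : mdot u u = -1) (ho : mdot u r = 0) :
    0 ≤ mdot r r := by
  obtain ⟨u0, u1, u2, u3⟩ := u; obtain ⟨r0, r1, r2, r3⟩ := r
  simp only [mdot] at *
  have hor : u0 * r0 = u1*r1 + u2*r2 + u3*r3 := by linarith
  have key : (u0*r0)^2 ≤ (u0^2 - 1) * (r1^2 + r2^2 + r3^2) := by
    rw [hor]
    nlinarith [sq_nonneg (u1*r2 - u2*r1), sq_nonneg (u1*r3 - u3*r1), sq_nonneg (u2*r3 - u3*r2)]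
  nlinarith [key, sq_nonneg r0, sq_nonneg r1, sq_nonneg r2, sq_nonneg r3, sq_nonneg u0]

/-- A null vector orthogonal to a timelike vector vanishes. -/
lemma eq_zero_of_null_orth {u r : M4} (hu : mdot u u = -1) (ho : mdot u r = 0)
    (hn : mdot r r = 0) : r = ((0:ℝ), (0:ℝ), (0:ℝ), (0:ℝ)) := by
  obtain ⟨u0, u1, u2, u3⟩ := u; obtain ⟨r0, r1, r2, r3⟩ := r
  simp only [mdot] at *
  have hor : u0 * r0 = u1*r1 + u2*r2 + u3*r3 := by linarith
  have key : (u0*r0)^2 ≤ (u0^2 - 1) * (r1^2 + r2^2 + r3^2) := by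
    rw [hor]
    nlinarith [sq_nonneg (u1*r2 - u2*r1), sq_nonneg (u1*r3 - u3*r1), sq_nonneg (u2*r3 - u3*r2)]
  have hR : r1^2 + r2^2 + r3^2 ≤ 0 := by nlinarith [sq_nonneg u0, sq_nonneg r0]
  have h1 : r1 = 0 := by nlinarith [sq_nonneg r1, sq_nonneg r2, sq_nonneg r3]
  have h2 : r2 = 0 := by nlinarith [sq_nonneg r1, sq_nonneg r2, sq_nonneg r3]
  have h3 : r3 = 0 := by nlinarith [sq_nonneg r1, sq_nonneg r2, sq_nonneg r3]
  have h0 : r0 = 0 := by nlinarith [sq_nonneg r0]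
  simp [h0, h1, h2, h3]

/-- Cauchy–Schwarz on the orthogonal complement of a timelike vector. -/
lemma mdot_sq_le_of_orth {u r r' : M4} (hu : mdot u u = -1) (h1 : mdot u r = 0)
    (h2 : mdot u r' = 0) : (mdot r r')^2 ≤ mdot r r * mdot r' r' := by
  have hall : ∀ l : ℝ, 0 ≤ mdot r' r' * (l * l) + (2 * mdot r r') * l + mdot r r := by
    intro l
    have horth : mdot u (lc 1 l r r') = 0 := by
      rw [mdot_lc_right, h1, h2]; ring
    have hnn := mdot_self_nonneg_of_orth hu horth
    rw [mdot_lc_left, mdot_lc_right, mdot_lc_right, mdot_comm r' r] at hnn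
    nlinarith [hnn]
  have hd := discrim_le_zero hall
  rw [discrim] at hd
  nlinarith [hd]
set_option maxHeartbeats 1000000 in
/-- Let `AB` be a geodesic segment in `H³` of length at least `2D`
(`D > 0`), and let `γ` be a bi-infinite geodesic with `d(A, γ) < 1` and `d(B, γ) < 1`.
Then any point `W` on the segment `AB` with `d(W, A) > D` and `d(W, B) > D` satisfies
`d(W, γ) ≤ 3 e^{-D}`. -/
theorem dist_to_geodesic_exponential_decay
    (D : ℝ) (hD : 0 < D)
    (A B W : ℝ × ℝ × ℝ) (hA : 0 < A.2.2) (hB : 0 < B.2.2) (hW : 0 < W.2.2)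
    (hAB : 2 * D ≤ hDist A B)
    (hWseg : hDist A W + hDist W B = hDist A B)
    (hWA : D < hDist W A) (hWB : D < hDist W B)
    (γ : Set (ℝ × ℝ × ℝ)) (hγ : IsGeodesicLine γ)
    (hAγ : sInf (hDist A '' γ) < 1) (hBγ : sInf (hDist B '' γ) < 1) :
    sInf (hDist W '' γ) ≤ 3 * Real.exp (-D) := by
  obtain ⟨f, hfz, hfiso, hγeq⟩ := hγ
  have hs1 : (0:ℝ) < Real.sinh 1 := Real.sinh_pos_iff.mpr one_pos
  have hFF : ∀ s t : ℝ, mdot (iota (f s)) (iota (f t)) = -Real.cosh (s - t) := by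
    intro s t
    rw [mdot_iota (hfz s) (hfz t)]
    have h1 : Real.cosh (hDist (f s) (f t)) = coshQ (f s) (f t) := cosh_hDist (hfz s) (hfz t)
    rw [hfiso s t, Real.cosh_abs] at h1
    rw [← h1]
  obtain ⟨u, hu_def⟩ : ∃ u : M4, u = iota (f 0) := ⟨_, rfl⟩
  obtain ⟨v, hv_def⟩ : ∃ v : M4,
      v = lc (1 / Real.sinh 1) (-(Real.cosh 1) / Real.sinh 1) (iota (f 1)) (iota (f 0)) :=
    ⟨_, rfl⟩
  have h00 : mdot (iota (f 0)) (iota (f 0)) = -1 := mdot_iota_self (hfz 0)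
  have h11 : mdot (iota (f 1)) (iota (f 1)) = -1 := mdot_iota_self (hfz 1)
  have h10 : mdot (iota (f 1)) (iota (f 0)) = -Real.cosh 1 := by
    have := hFF 1 0; simpa using this
  have h01 : mdot (iota (f 0)) (iota (f 1)) = -Real.cosh 1 := by
    rw [mdot_comm]; exact h10
  have huu : mdot u u = -1 := by rw [hu_def]; exact h00
  have hu0 : 0 < u.1 := by rw [hu_def]; exact iota_fst_pos (hfz 0)
  have hvv : mdot v v = 1 := by
    rw [hv_def, mdot_lc_left, mdot_lc_right, mdot_lc_right, h11, h10, h01, h00]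
    field_simp
    linear_combination Real.cosh_sq 1
  have huv : mdot u v = 0 := by
    rw [hu_def, hv_def, mdot_lc_right, h01, h00]
    field_simp
    ring
  have hvu : mdot v u = 0 := by rw [mdot_comm]; exact huv
  have hFrep : ∀ r : ℝ, iota (f r) = lc (Real.cosh r) (Real.sinh r) u v := by
    intro r
    have hFtt : mdot (iota (f r)) (iota (f r)) = -1 := mdot_iota_self (hfz r)
    have hFtu : mdot (iota (f r)) u = -Real.cosh r := by
      rw [hu_def]; simpa using hFF r 0
    have hFtv : mdot (iota (f r)) v = Real.sinh r := by
      rw [hv_def, mdot_lc_right]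
      rw [show mdot (iota (f r)) (iota (f 1)) = -Real.cosh (r - 1) from hFF r 1]
      rw [show mdot (iota (f r)) (iota (f 0)) = -Real.cosh r from by simpa using hFF r 0]
      rw [Real.cosh_sub]
      field_simp
      ring
    have huFt : mdot u (iota (f r)) = -Real.cosh r := by rw [mdot_comm]; exact hFtu
    have hvFt : mdot v (iota (f r)) = Real.sinh r := by rw [mdot_comm]; exact hFtv
    refine eq_of_sub4_eq_zero (eq_zero_of_null_orth huu ?_ ?_)
    · rw [mdot_sub_right, mdot_lc_right, huFt, huu, huv]; ring
    · simp only [mdot_sub_left, mdot_sub_right, mdot_lc_left, mdot_lc_right, hFtt, hFtu,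
        hFtv, huFt, hvFt, huu, hvv, huv, hvu]
      linear_combination Real.cosh_sq r
  -- the three marked points in the hyperboloid model
  obtain ⟨a, ha_def⟩ : ∃ a : M4, a = iota A := ⟨_, rfl⟩
  obtain ⟨b, hb_def⟩ : ∃ b : M4, b = iota B := ⟨_, rfl⟩
  obtain ⟨w, hw_def⟩ : ∃ w : M4, w = iota W := ⟨_, rfl⟩
  have haa : mdot a a = -1 := by rw [ha_def]; exact mdot_iota_self hA
  have hbb : mdot b b = -1 := by rw [hb_def]; exact mdot_iota_self hB
  have hww : mdot w w = -1 := by rw [hw_def]; exact mdot_iota_self hW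
  have ha0 : 0 < a.1 := by rw [ha_def]; exact iota_fst_pos hA
  have hb0 : 0 < b.1 := by rw [hb_def]; exact iota_fst_pos hB
  have hw0 : 0 < w.1 := by rw [hw_def]; exact iota_fst_pos hW
  obtain ⟨s, hs_def⟩ : ∃ s : ℝ, s = hDist A W := ⟨_, rfl⟩
  obtain ⟨t, ht_def⟩ : ∃ t : ℝ, t = hDist W B := ⟨_, rfl⟩
  obtain ⟨L, hL_def⟩ : ∃ L : ℝ, L = hDist A B := ⟨_, rfl⟩
  have hsL : s + t = L := by rw [hs_def, ht_def, hL_def]; exact hWseg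
  have hsD : D < s := by rw [hs_def, hDist_comm]; exact hWA
  have htD : D < t := by rw [ht_def]; exact hWB
  have hspos : 0 < s := lt_trans hD hsD
  have htpos : 0 < t := lt_trans hD htD
  have hLpos : 0 < L := by linarith
  have hsinhL : 0 < Real.sinh L := Real.sinh_pos_iff.mpr hLpos
  have haw : mdot a w = -Real.cosh s := by
    rw [ha_def, hw_def, mdot_iota hA hW, ← cosh_hDist hA hW, hs_def]
  have hbw : mdot b w = -Real.cosh t := by
    rw [hb_def, hw_def, mdot_iota hB hW, ← cosh_hDist hB hW, hDist_comm B W, ht_def]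
  have hab : mdot a b = -Real.cosh L := by
    rw [ha_def, hb_def, mdot_iota hA hB, ← cosh_hDist hA hB, hL_def]
  have hwa : mdot w a = -Real.cosh s := by rw [mdot_comm]; exact haw
  have hwb : mdot w b = -Real.cosh t := by rw [mdot_comm]; exact hbw
  have hba : mdot b a = -Real.cosh L := by rw [mdot_comm]; exact hab
  -- coordinates with respect to (u, v)
  obtain ⟨pA, hpA_def⟩ : ∃ x : ℝ, x = -mdot a u := ⟨_, rfl⟩
  obtain ⟨qA, hqA_def⟩ : ∃ x : ℝ, x = -mdot a v := ⟨_, rfl⟩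
  obtain ⟨pB, hpB_def⟩ : ∃ x : ℝ, x = -mdot b u := ⟨_, rfl⟩
  obtain ⟨qB, hqB_def⟩ : ∃ x : ℝ, x = -mdot b v := ⟨_, rfl⟩
  obtain ⟨pW, hpW_def⟩ : ∃ x : ℝ, x = -mdot w u := ⟨_, rfl⟩
  obtain ⟨qW, hqW_def⟩ : ∃ x : ℝ, x = -mdot w v := ⟨_, rfl⟩
  have hau : mdot a u = -pA := by rw [hpA_def]; ring
  have hav : mdot a v = -qA := by rw [hqA_def]; ring
  have hbu : mdot b u = -pB := by rw [hpB_def]; ring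
  have hbv : mdot b v = -qB := by rw [hqB_def]; ring
  have hwu : mdot w u = -pW := by rw [hpW_def]; ring
  have hwv : mdot w v = -qW := by rw [hqW_def]; ring
  have hua : mdot u a = -pA := by rw [mdot_comm]; exact hau
  have hva : mdot v a = -qA := by rw [mdot_comm]; exact hav
  have hub : mdot u b = -pB := by rw [mdot_comm]; exact hbu
  have hvb : mdot v b = -qB := by rw [mdot_comm]; exact hbv
  have huw : mdot u w = -pW := by rw [mdot_comm]; exact hwu
  have hvw : mdot v w = -qW := by rw [mdot_comm]; exact hwv
  have hpA1 : 1 ≤ pA := by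
    have := mdot_le_neg_one haa huu ha0 hu0; rw [hau] at this; linarith
  have hpB1 : 1 ≤ pB := by
    have := mdot_le_neg_one hbb huu hb0 hu0; rw [hbu] at this; linarith
  have hpW1 : 1 ≤ pW := by
    have := mdot_le_neg_one hww huu hw0 hu0; rw [hwu] at this; linarith
  -- orthogonal components
  obtain ⟨rA, hrA_def⟩ : ∃ r : M4, r = sub4 a (lc pA (-qA) u v) := ⟨_, rfl⟩
  obtain ⟨rB, hrB_def⟩ : ∃ r : M4, r = sub4 b (lc pB (-qB) u v) := ⟨_, rfl⟩
  obtain ⟨rW, hrW_def⟩ : ∃ r : M4, r = sub4 w (lc pW (-qW) u v) := ⟨_, rfl⟩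
  have horthA : mdot u rA = 0 := by
    rw [hrA_def, mdot_sub_right, mdot_lc_right, hua, huu, huv]; ring
  have horthB : mdot u rB = 0 := by
    rw [hrB_def, mdot_sub_right, mdot_lc_right, hub, huu, huv]; ring
  have horthW : mdot u rW = 0 := by
    rw [hrW_def, mdot_sub_right, mdot_lc_right, huw, huu, huv]; ring
  have hSAeq : mdot rA rA = pA^2 - qA^2 - 1 := by
    rw [hrA_def]
    simp only [mdot_sub_left, mdot_sub_right, mdot_lc_left, mdot_lc_right, haa, hau, hav,
      hua, hva, huu, hvv, huv, hvu]
    ring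
  have hSBeq : mdot rB rB = pB^2 - qB^2 - 1 := by
    rw [hrB_def]
    simp only [mdot_sub_left, mdot_sub_right, mdot_lc_left, mdot_lc_right, hbb, hbu, hbv,
      hub, hvb, huu, hvv, huv, hvu]
    ring
  have hSWeq : mdot rW rW = pW^2 - qW^2 - 1 := by
    rw [hrW_def]
    simp only [mdot_sub_left, mdot_sub_right, mdot_lc_left, mdot_lc_right, hww, hwu, hwv,
      huw, hvw, huu, hvv, huv, hvu]
    ring
  have hSA0 : 0 ≤ pA^2 - qA^2 - 1 := by
    rw [← hSAeq]; exact mdot_self_nonneg_of_orth huu horthA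
  have hSB0 : 0 ≤ pB^2 - qB^2 - 1 := by
    rw [← hSBeq]; exact mdot_self_nonneg_of_orth huu horthB
  have hSW0 : 0 ≤ pW^2 - qW^2 - 1 := by
    rw [← hSWeq]; exact mdot_self_nonneg_of_orth huu horthW
  -- the closeness hypotheses
  have key : ∀ P : ℝ × ℝ × ℝ, 0 < P.2.2 → sInf (hDist P '' γ) < 1 →
      (-mdot (iota P) u)^2 - (-mdot (iota P) v)^2 - 1 < Real.sinh 1 ^ 2 := by
    intro P hP hPγ
    have him : hDist P '' γ = Set.range (fun r => hDist P (f r)) := by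
      rw [hγeq, ← Set.range_comp]; rfl
    rw [him] at hPγ
    obtain ⟨y, hymem, hlt⟩ := exists_lt_of_csInf_lt (Set.range_nonempty _) hPγ
    obtain ⟨tP, rfl⟩ := hymem
    simp only at hlt
    obtain ⟨p, hp_def⟩ : ∃ x : ℝ, x = -mdot (iota P) u := ⟨_, rfl⟩
    obtain ⟨q, hq_def⟩ : ∃ x : ℝ, x = -mdot (iota P) v := ⟨_, rfl⟩
    rw [← hp_def, ← hq_def]
    have hcQ : coshQ P (f tP) = p * Real.cosh tP + q * Real.sinh tP := by
      have h1 : mdot (iota P) (iota (f tP)) = -(p * Real.cosh tP + q * Real.sinh tP) := by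
        rw [hFrep tP, mdot_lc_right]
        rw [show mdot (iota P) u = -p from by rw [hp_def]; ring]
        rw [show mdot (iota P) v = -q from by rw [hq_def]; ring]
        ring
      have h2 := mdot_iota hP (hfz tP)
      rw [h2] at h1; linarith
    have hy1 : 1 ≤ p * Real.cosh tP + q * Real.sinh tP := by
      rw [← hcQ]; exact coshQ_ge_one hP (hfz tP)
    have hylt : p * Real.cosh tP + q * Real.sinh tP < Real.cosh 1 := by
      by_contra hc
      push_neg at hc
      have : (1:ℝ) ≤ hDist P (f tP) := by
        rw [hDist_eq_arcosh]
        exact le_arcosh zero_le_one (by rw [hcQ]; exact hc)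
      linarith
    have hid : (p * Real.cosh tP + q * Real.sinh tP)^2
        - (p * Real.sinh tP + q * Real.cosh tP)^2 = p^2 - q^2 := by
      linear_combination (p^2 - q^2) * Real.cosh_sq tP
    clear * - hy1 hylt hid
    nlinarith [sq_nonneg (p * Real.sinh tP + q * Real.cosh tP), Real.cosh_sq 1, hy1, hylt, hid]
  have hSAlt : pA^2 - qA^2 - 1 < Real.sinh 1 ^ 2 := by
    have h := key A hA hAγ
    rw [← ha_def, hau, hav] at h
    simpa using h
  have hSBlt : pB^2 - qB^2 - 1 < Real.sinh 1 ^ 2 := by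
    have h := key B hB hBγ
    rw [← hb_def, hbu, hbv] at h
    simpa using h
  -- W lies on the geodesic segment from A to B
  obtain ⟨α, hα⟩ : ∃ x : ℝ, x = Real.sinh t / Real.sinh L := ⟨_, rfl⟩
  obtain ⟨β, hβ⟩ : ∃ x : ℝ, x = Real.sinh s / Real.sinh L := ⟨_, rfl⟩
  have hα0 : 0 ≤ α := by
    rw [hα]; exact div_nonneg (Real.sinh_nonneg_iff.mpr htpos.le) hsinhL.le
  have hβ0 : 0 ≤ β := by
    rw [hβ]; exact div_nonneg (Real.sinh_nonneg_iff.mpr hspos.le) hsinhL.le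
  have e1 : Real.sinh t * Real.cosh s + Real.sinh s * Real.cosh t = Real.sinh (s + t) := by
    rw [Real.sinh_add]; ring
  have e2 : Real.sinh t + Real.sinh s * Real.cosh (s + t)
      = Real.cosh s * Real.sinh (s + t) := by
    rw [Real.sinh_add, Real.cosh_add]
    linear_combination (-Real.sinh t) * Real.cosh_sq s
  have e3 : Real.sinh t * Real.cosh (s + t) + Real.sinh s
      = Real.cosh t * Real.sinh (s + t) := by
    rw [Real.sinh_add, Real.cosh_add]
    linear_combination (-Real.sinh s) * Real.cosh_sq t
  have f1 : α * Real.cosh s + β * Real.cosh t = 1 := by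
    rw [hα, hβ, ← hsL]
    field_simp
    linear_combination e1
  have f2 : α + β * Real.cosh L = Real.cosh s := by
    rw [hα, hβ, ← hsL]
    field_simp
    linear_combination e2
  have f3 : α * Real.cosh L + β = Real.cosh t := by
    rw [hα, hβ, ← hsL]
    field_simp
    linear_combination e3
  have hr_a : mdot a (sub4 w (lc α β a b)) = 0 := by
    rw [mdot_sub_right, mdot_lc_right, haw, haa, hab]
    linarith [f2]
  have hr_r : mdot (sub4 w (lc α β a b)) (sub4 w (lc α β a b)) = 0 := by
    simp only [mdot_sub_left, mdot_sub_right, mdot_lc_left, mdot_lc_right, hww, hwa, hwb,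
      haw, hbw, haa, hbb, hab, hba]
    linear_combination f1 - α * f2 - β * f3
  have hWrep : w = lc α β a b := eq_of_sub4_eq_zero (eq_zero_of_null_orth haa hr_a hr_r)
  have hpW : pW = α * pA + β * pB := by
    have h := hwu
    rw [hWrep, mdot_lc_left, hau, hbu] at h
    linarith
  have hqW : qW = α * qA + β * qB := by
    have h := hwv
    rw [hWrep, mdot_lc_left, hav, hbv] at h
    linarith
  have g1 : α^2 + β^2 + 2*α*β*Real.cosh L = 1 := by
    have h := hww
    rw [hWrep, mdot_lc_left, mdot_lc_right, mdot_lc_right, haa, hab, hba, hbb] at h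
    linear_combination -h
  have g2 : pA*pB - qA*qB - Real.cosh L = mdot rA rB := by
    rw [hrA_def, hrB_def]
    simp only [mdot_sub_left, mdot_sub_right, mdot_lc_left, mdot_lc_right, hab, hau, hav,
      hub, hvb, huu, hvv, huv, hvu]
    ring
  have hρ2 : (mdot rA rB)^2 ≤ (pA^2-qA^2-1) * (pB^2-qB^2-1) := by
    have h := mdot_sq_le_of_orth huu horthA horthB
    rw [hSAeq, hSBeq] at h
    exact h
  obtain ⟨sa, hsa⟩ : ∃ x : ℝ, x = Real.sqrt (pA^2-qA^2-1) := ⟨_, rfl⟩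
  obtain ⟨sb, hsb⟩ : ∃ x : ℝ, x = Real.sqrt (pB^2-qB^2-1) := ⟨_, rfl⟩
  have hsa0 : 0 ≤ sa := by rw [hsa]; exact Real.sqrt_nonneg _
  have hsb0 : 0 ≤ sb := by rw [hsb]; exact Real.sqrt_nonneg _
  have hsa2 : sa^2 = pA^2-qA^2-1 := by rw [hsa]; exact Real.sq_sqrt hSA0
  have hsb2 : sb^2 = pB^2-qB^2-1 := by rw [hsb]; exact Real.sq_sqrt hSB0
  have hsalt : sa ≤ Real.sinh 1 := by
    rw [hsa]
    calc Real.sqrt (pA^2-qA^2-1) ≤ Real.sqrt (Real.sinh 1 ^ 2) :=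
          Real.sqrt_le_sqrt hSAlt.le
      _ = Real.sinh 1 := Real.sqrt_sq hs1.le
  have hsblt : sb ≤ Real.sinh 1 := by
    rw [hsb]
    calc Real.sqrt (pB^2-qB^2-1) ≤ Real.sqrt (Real.sinh 1 ^ 2) :=
          Real.sqrt_le_sqrt hSBlt.le
      _ = Real.sinh 1 := Real.sqrt_sq hs1.le
  have hprod : (sa*sb)^2 = (pA^2-qA^2-1)*(pB^2-qB^2-1) := by
    rw [mul_pow, hsa2, hsb2]
  have hρle : mdot rA rB ≤ sa * sb := by
    clear * - hρ2 hprod hsa0 hsb0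
    nlinarith [hρ2, hprod, mul_nonneg hsa0 hsb0]
  -- the quantitative bounds
  have hcoshD : 0 < Real.cosh D := Real.cosh_pos D
  have hnum : (Real.sinh t + Real.sinh s) * Real.cosh D ≤ Real.sinh L := by
    rw [← hsL, Real.sinh_add]
    have h1 : Real.cosh D ≤ Real.cosh t := Real.cosh_le_cosh.mpr
      (by rw [abs_of_pos hD, abs_of_pos htpos]; exact htD.le)
    have h2 : Real.cosh D ≤ Real.cosh s := Real.cosh_le_cosh.mpr
      (by rw [abs_of_pos hD, abs_of_pos hspos]; exact hsD.le)
    clear * - h1 h2 htpos hspos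
    nlinarith [Real.sinh_nonneg_iff.mpr htpos.le, Real.sinh_nonneg_iff.mpr hspos.le, h1, h2]
  have hαβ : α + β ≤ 1 / Real.cosh D := by
    rw [hα, hβ, ← add_div, div_le_div_iff₀ hsinhL hcoshD]
    linarith [hnum]
  have h2exp : 1 / Real.cosh D ≤ 2 * Real.exp (-D) := by
    rw [div_le_iff₀ hcoshD]
    have hx : Real.exp (-D) * Real.exp D = 1 := by rw [← Real.exp_add]; simp
    clear * - hx
    nlinarith [Real.cosh_eq D, Real.exp_pos (-D), Real.exp_pos D, hx]
  have hsinh1 : Real.sinh 1 ≤ 3/2 := by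
    rw [Real.sinh_eq]
    clear * - hD
    nlinarith [Real.exp_one_lt_d9, Real.exp_pos (-1)]
  have hE : 0 < 3 * Real.exp (-D) := by positivity
  have hcomb : α * sa + β * sb ≤ 3 * Real.exp (-D) := by
    have hA1 : α * sa + β * sb ≤ (α + β) * Real.sinh 1 := by
      clear * - hα0 hβ0 hsalt hsblt hsa0 hsb0
      nlinarith [hα0, hβ0, hsalt, hsblt, hsa0, hsb0]
    have hA2 : (α + β) * Real.sinh 1 ≤ (1 / Real.cosh D) * Real.sinh 1 :=
      mul_le_mul_of_nonneg_right hαβ hs1.le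
    have hA3 : (1 / Real.cosh D) * Real.sinh 1 ≤ (2 * Real.exp (-D)) * (3/2) := by
      apply mul_le_mul h2exp hsinh1 hs1.le (by positivity)
    linarith
  have hcomb0 : 0 ≤ α * sa + β * sb :=
    add_nonneg (mul_nonneg hα0 hsa0) (mul_nonneg hβ0 hsb0)
  have hswlow : pW^2 - qW^2 - 1 = α^2*(pA^2-qA^2-1) + β^2*(pB^2-qB^2-1)
      + 2*α*β*(mdot rA rB) := by
    rw [hpW, hqW]
    linear_combination (2*α*β) * g2 + g1
  have hSWle : pW^2 - qW^2 - 1 ≤ (3*Real.exp (-D))^2 := by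
    have h1 : pW^2 - qW^2 - 1 ≤ (α*sa + β*sb)^2 := by
      rw [hswlow]
      clear * - hρle hα0 hβ0 hsa2 hsb2
      nlinarith [hρle, mul_nonneg hα0 hβ0, hsa2, hsb2]
    have h2 : (α*sa + β*sb)^2 ≤ (3*Real.exp (-D))^2 := by
      clear * - hcomb hcomb0
      nlinarith [hcomb, hcomb0]
    linarith
  -- conclusion: pick the nearest point on γ
  obtain ⟨c, hc⟩ : ∃ x : ℝ, x = Real.sqrt (pW^2 - qW^2) := ⟨_, rfl⟩
  have hc0 : 0 ≤ c := by rw [hc]; exact Real.sqrt_nonneg _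
  have hc2 : c^2 = pW^2 - qW^2 := by
    rw [hc]; exact Real.sq_sqrt (by clear * - hSW0; nlinarith [hSW0])
  have hc1 : 1 ≤ c := by clear * - hc2 hSW0 hc0; nlinarith [hc2, hSW0, hc0]
  have hcpos : 0 < c := lt_of_lt_of_le one_pos hc1
  obtain ⟨t0, ht0⟩ : ∃ x : ℝ, x = Real.arsinh (-qW / c) := ⟨_, rfl⟩
  have hcosh0 : Real.cosh t0 = pW / c := by
    rw [ht0, Real.cosh_arsinh]
    have h1 : 1 + (-qW/c)^2 = (pW/c)^2 := by
      field_simp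
      linarith [hc2]
    rw [h1, Real.sqrt_sq (by positivity)]
  have hsinh0 : Real.sinh t0 = -qW/c := by rw [ht0, Real.sinh_arsinh]
  have hval : hDist W (f t0) = arcosh c := by
    rw [hDist_eq_arcosh]
    congr 1
    have h1 : mdot w (iota (f t0)) = -c := by
      rw [hFrep t0, mdot_lc_right, hwu, hwv, hcosh0, hsinh0]
      have hcne : c ≠ 0 := ne_of_gt hcpos
      field_simp
      linear_combination hc2
    have h2 := mdot_iota hW (hfz t0)
    rw [← hw_def] at h2
    rw [h1] at h2
    linarith
  have hcE : c ≤ Real.cosh (3 * Real.exp (-D)) := by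
    have hs3 : 3*Real.exp (-D) ≤ Real.sinh (3*Real.exp (-D)) :=
      Real.self_le_sinh_iff.mpr hE.le
    have h1 : pW^2 - qW^2 ≤ Real.cosh (3*Real.exp (-D))^2 := by
      clear * - hSWle hE hs3
      nlinarith [Real.cosh_sq (3*Real.exp (-D)), hSWle, hE.le, hs3]
    calc c = Real.sqrt (pW^2 - qW^2) := hc
      _ ≤ Real.sqrt (Real.cosh (3*Real.exp (-D))^2) := Real.sqrt_le_sqrt h1
      _ = Real.cosh (3*Real.exp (-D)) := Real.sqrt_sq (le_of_lt (Real.cosh_pos _))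
  have hmem : arcosh c ∈ hDist W '' γ := by
    refine ⟨f t0, ?_, hval⟩
    rw [hγeq]
    exact Set.mem_range_self t0
  have hbdd : BddBelow (hDist W '' γ) := by
    refine ⟨0, fun y hy => ?_⟩
    obtain ⟨P, hPγ, rfl⟩ := hy
    have hPz : 0 < P.2.2 := by
      rw [hγeq] at hPγ; obtain ⟨r0, rfl⟩ := hPγ; exact hfz r0
    exact hDist_nonneg hW hPz
  have hfin : arcosh c ≤ 3 * Real.exp (-D) := arcosh_le_of_le hc1 hE.le hcE
  calc sInf (hDist W '' γ) ≤ arcosh c := csInf_le hbdd hmem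
    _ ≤ 3 * Real.exp (-D) := hfin
end
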